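/- Let A be an abelian category and let X, Y be chain complexes over A. For every n ∈ ℤ there are isomorphisms of abelian groups Ext^1_dw(X, Σ^{−n−1}Y) ≅ H_n(Hom(X,Y)) ≅ K(A)(X, Σ^{−n}Y), where K(A)(X, Σ^{−n}Y) is the group of chain homotopy classes of chain maps X → Σ^{−n}Y. In particular, Hom(X,Y) is exact if and only if every chain map Σ^n X → Y (for every n) is null homotopic. -/

import Mathlib

set_option linter.unusedVariables false

open CategoryTheory CategoryTheory.Limits ZeroObject

universe v u

namespace GorensteinAC





/-! ### General notions in an abelian category -/

section AbelianNotions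

variable {𝒜 : Type u} [Category.{v} 𝒜] [Abelian 𝒜]

/-- `Ext¹(X,Y) = 0`, expressed by the (Yoneda) condition that every short exact
sequence `0 → Y → Z → X → 0` splits. -/
def Ext1IsZero (X Y : 𝒜) : Prop :=
  ∀ (Z : 𝒜) (i : Y ⟶ Z) (p : Z ⟶ X) (w : i ≫ p = 0),
    (ShortComplex.mk i p w).ShortExact → ∃ s : X ⟶ Z, s ≫ p = 𝟙 X

/-- The right `Ext¹`-orthogonal of a class of objects. -/
def rightPerp (S : Set 𝒜) : Set 𝒜 := {Y | ∀ X ∈ S, Ext1IsZero X Y}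

/-- The left `Ext¹`-orthogonal of a class of objects. -/
def leftPerp (S : Set 𝒜) : Set 𝒜 := {X | ∀ Y ∈ S, Ext1IsZero X Y}

/-- `(X, Y)` is a cotorsion pair. -/
def IsCotorsionPair (X Y : Set 𝒜) : Prop := Y = rightPerp X ∧ X = leftPerp Y

/-- `(X, Y)` is a complete cotorsion pair: it is a cotorsion pair with enough
projectives and enough injectives. -/
def IsCompleteCotorsionPair (X Y : Set 𝒜) : Prop :=
  IsCotorsionPair X Y ∧
  (∀ A : 𝒜, ∃ (Y' X' : 𝒜) (i : Y' ⟶ X') (p : X' ⟶ A) (w : i ≫ p = 0),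
    (ShortComplex.mk i p w).ShortExact ∧ X' ∈ X ∧ Y' ∈ Y) ∧
  (∀ A : 𝒜, ∃ (Y' X' : 𝒜) (i : A ⟶ Y') (p : Y' ⟶ X') (w : i ≫ p = 0),
    (ShortComplex.mk i p w).ShortExact ∧ X' ∈ X ∧ Y' ∈ Y)

/-- A class is thick if it is closed under direct summands (retracts) and satisfies
the two-out-of-three property on short exact sequences. -/
def IsThick (W : Set 𝒜) : Prop :=
  (∀ A B : 𝒜, (∃ (s : A ⟶ B) (r : B ⟶ A), s ≫ r = 𝟙 A) → B ∈ W → A ∈ W) ∧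
  (∀ S : ShortComplex 𝒜, S.ShortExact →
    ((S.X₁ ∈ W → S.X₂ ∈ W → S.X₃ ∈ W) ∧ (S.X₁ ∈ W → S.X₃ ∈ W → S.X₂ ∈ W) ∧
      (S.X₂ ∈ W → S.X₃ ∈ W → S.X₁ ∈ W)))

/-- A projective cotorsion pair: a complete cotorsion pair `(C, W)` with `W` thick
and `C ∩ W` exactly the class of projective objects. -/
def IsProjectiveCotorsionPair (C W : Set 𝒜) : Prop :=
  IsCompleteCotorsionPair C W ∧ IsThick W ∧ (C ∩ W = {P : 𝒜 | Projective P})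

/-- The sphere complex `S^n(A)`: `A` concentrated in degree `n`. -/
noncomputable def sphere (n : ℤ) (A : 𝒜) : ChainComplex 𝒜 ℤ :=
  (HomologicalComplex.single 𝒜 (ComplexShape.down ℤ) n).obj A

/-- The disk complex `D^n(A)`: `A` in degrees `n` and `n-1` with identity differential. -/
noncomputable def disk (n : ℤ) (A : 𝒜) : ChainComplex 𝒜 ℤ where
  X i := if i = n ∨ i = n - 1 then A else 0
  d i j :=
    if h : i = n ∧ j = n - 1 then
      eqToHom (by (try dsimp only); rw [if_pos (Or.inl h.1), if_pos (Or.inr h.2)])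
    else 0
  shape i j hij := by
    apply dif_neg
    rintro ⟨rfl, rfl⟩
    exact hij (by simp only [ComplexShape.down_Rel]; omega)
  d_comp_d' i j k hij hjk := by
    try dsimp only
    by_cases h : i = n ∧ j = n - 1
    · rw [dif_neg (show ¬(j = n ∧ k = n - 1) by rintro ⟨rfl, -⟩; omega), comp_zero]
    · rw [dif_neg h, zero_comp]

end AbelianNotions






section AbelianNotionsB
variable {𝒜 : Type u} [Category.{v} 𝒜] [Abelian 𝒜]

/-- The complex `𝔻` remains exact after applying the contravariant functor `Hom(-, L)`. -/
def HomIntoExact (𝔻 : ChainComplex 𝒜 ℤ) (L : 𝒜) : Prop :=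
  ∀ (n : ℤ) (f : 𝔻.X n ⟶ L), 𝔻.d (n + 1) n ≫ f = 0 →
    ∃ g : 𝔻.X (n - 1) ⟶ L, f = 𝔻.d n (n - 1) ≫ g

/-- The complex `𝔻` remains exact after applying the covariant functor `Hom(A, -)`. -/
def HomFromExact (𝔻 : ChainComplex 𝒜 ℤ) (A : 𝒜) : Prop :=
  ∀ (n : ℤ) (f : A ⟶ 𝔻.X n), f ≫ 𝔻.d n (n - 1) = 0 →
    ∃ g : A ⟶ 𝔻.X (n + 1), f = g ≫ 𝔻.d (n + 1) n

end AbelianNotionsB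

abbrev Ch (R : Type) [Ring R] := ChainComplex (ModuleCat R) ℤ
abbrev DCh (R : Type) [Ring R] := ChainComplex (Ch R) ℤ

def IsTypeFPInfty {S : Type} [Ring S] (F : ModuleCat S) : Prop :=
  ∃ P : ProjectiveResolution F, ∀ n : ℕ, Module.Finite S (P.complex.X n)

/-- A module is countably generated if it has a countable generating set. -/
def IsCountablyGenerated {S : Type} [Ring S] (M : ModuleCat S) : Prop :=
  ∃ s : Set M, s.Countable ∧ Submodule.span S s = ⊤

/-- A chain complex is countably generated iff each component is countably generated. -/
def IsCountablyGeneratedCx {S : Type} [Ring S] (X : ChainComplex (ModuleCat S) ℤ) : Prop :=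
  ∀ n : ℤ, IsCountablyGenerated (X.X n)

/-- A module `M` has projective dimension at most `n` : it admits a projective
resolution vanishing above degree `n`. -/
def HasProjDimLE {S : Type} [Ring S] (M : ModuleCat S) (n : ℕ) : Prop :=
  ∃ P : ProjectiveResolution M, ∀ k : ℕ, n < k → IsZero (P.complex.X k)

/-- A module is absolutely pure (FP-injective) if `Ext¹(F, E) = 0` for every finitely
presented module `F`. -/
def IsAbsolutelyPure {S : Type} [Ring S] (E : ModuleCat S) : Prop :=
  ∀ F : ModuleCat S, Module.FinitePresentation S F → Ext1IsZero F E

/-- A module is absolutely clean if `Ext¹(F, A) = 0` for every module `F` of type `FP_∞`. -/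
def IsAbsolutelyClean {S : Type} [Ring S] (A : ModuleCat S) : Prop :=
  ∀ F : ModuleCat S, IsTypeFPInfty F → Ext1IsZero F A

/-- `M` has absolutely pure (FP-injective) dimension at most `n` : there is an exact
sequence `0 → M → E⁰ → ⋯ → Eⁿ → 0` with each `Eⁱ` absolutely pure. -/
def HasAbsPureDimLE {S : Type} [Ring S] (M : ModuleCat S) (n : ℕ) : Prop :=
  ∃ D : CochainComplex (ModuleCat S) ℕ,
    Nonempty (D.X 0 ≅ M) ∧ (∀ i : ℕ, D.ExactAt i) ∧
      (∀ i : ℕ, 1 ≤ i → IsAbsolutelyPure (D.X i)) ∧ (∀ i : ℕ, n + 1 < i → IsZero (D.X i))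

section Coherent
variable (R : Type) [Ring R]

/-- `R` is left coherent: every finitely generated left ideal is finitely presented. -/
def IsLeftCoherent : Prop :=
  ∀ I : Ideal R, I.FG → Module.FinitePresentation R I

/-- `R` is right coherent: every finitely generated right ideal is finitely presented. -/
def IsRightCoherent : Prop :=
  ∀ I : Submodule Rᵐᵒᵖ R, I.FG → Module.FinitePresentation Rᵐᵒᵖ I

/-- A Ding-Chen ring: a two-sided coherent ring with finite self-FP-injective dimension
on both sides. -/
def IsDingChen : Prop :=
  IsLeftCoherent R ∧ IsRightCoherent R ∧
    (∃ n : ℕ, HasAbsPureDimLE (ModuleCat.of R R) n) ∧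
    ∃ n : ℕ, HasAbsPureDimLE (ModuleCat.of Rᵐᵒᵖ Rᵐᵒᵖ) n

end Coherent

section Modules
variable {R : Type} [Ring R]

open TensorProduct in
noncomputable def ncRel (R : Type) [Ring R] (M : Type) [AddCommGroup M] [Module Rᵐᵒᵖ M]
    (N : Type) [AddCommGroup N] [Module R N] : AddSubgroup (TensorProduct ℤ M N) :=
  AddSubgroup.closure
    {z | ∃ (r : R) (m : M) (n : N),
      z = (MulOpposite.op r • m) ⊗ₜ[ℤ] n - m ⊗ₜ[ℤ] (r • n)}

def IsLevel (L : ModuleCat R) : Prop :=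
  ∀ (K P F : ModuleCat Rᵐᵒᵖ) (i : K ⟶ P) (p : P ⟶ F) (w : i ≫ p = 0),
    (ShortComplex.mk i p w).ShortExact → Projective P → IsTypeFPInfty F →
    ∀ z : TensorProduct ℤ K L,
      TensorProduct.map i.hom.toAddMonoidHom.toIntLinearMap (LinearMap.id (R := ℤ) (M := L)) z
        ∈ ncRel R P L → z ∈ ncRel R K L

/-- A module `L` is flat if for every monomorphism `K → P` of right modules, the
induced map `K ⊗_R L → P ⊗_R L` is injective. -/
def IsFlat (L : ModuleCat R) : Prop :=
  ∀ (K P : ModuleCat Rᵐᵒᵖ) (i : K ⟶ P), Mono i →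
    ∀ z : TensorProduct ℤ K L,
      TensorProduct.map i.hom.toAddMonoidHom.toIntLinearMap (LinearMap.id (R := ℤ) (M := L)) z
        ∈ ncRel R P L → z ∈ ncRel R K L

/-- `M` has flat dimension at most `n` : there is an exact sequence
`0 → Fₙ → ⋯ → F₀ → M → 0` with each `Fᵢ` flat. -/
def HasFlatDimLE (M : ModuleCat R) (n : ℕ) : Prop :=
  ∃ D : ChainComplex (ModuleCat R) ℕ,
    Nonempty (D.X 0 ≅ M) ∧ (∀ i : ℕ, D.ExactAt i) ∧
      (∀ i : ℕ, 1 ≤ i → IsFlat (D.X i)) ∧ (∀ i : ℕ, n + 1 < i → IsZero (D.X i))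

/-- A Gorenstein projective module: a cycle of an exact complex of projective modules
which remains exact under `Hom(-, Q)` for every projective module `Q`. -/
noncomputable def IsGorProjMod (M : ModuleCat R) : Prop :=
  ∃ D : ChainComplex (ModuleCat R) ℤ,
    (∀ n : ℤ, Projective (D.X n)) ∧ (∀ n : ℤ, D.ExactAt n) ∧
      (∀ Q : ModuleCat R, Projective Q → HomIntoExact D Q) ∧
      Nonempty (M ≅ kernel (D.d 0 (-1)))

/-- A Gorenstein injective module: a cycle of an exact complex of injective modules
which remains exact under `Hom(E, -)` for every injective module `E`. -/
noncomputable def IsGorInjMod (M : ModuleCat R) : Prop :=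
  ∃ D : ChainComplex (ModuleCat R) ℤ,
    (∀ n : ℤ, Injective (D.X n)) ∧ (∀ n : ℤ, D.ExactAt n) ∧
      (∀ E : ModuleCat R, Injective E → HomFromExact D E) ∧
      Nonempty (M ≅ kernel (D.d 0 (-1)))

end Modules

section Complexes
variable {R : Type} [Ring R]

def IsLevelComplex (L : Ch R) : Prop :=
  (∀ n : ℤ, L.ExactAt n) ∧ ∀ n : ℤ, IsLevel (L.cycles n)

/-- A flat chain complex: exact with all cycle modules flat. -/
def IsFlatComplex (F : Ch R) : Prop :=
  (∀ n : ℤ, F.ExactAt n) ∧ ∀ n : ℤ, IsFlat (F.cycles n)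

/-- An absolutely clean chain complex: exact with all cycle modules absolutely clean. -/
def IsAbsCleanComplex (A : Ch R) : Prop :=
  (∀ n : ℤ, A.ExactAt n) ∧ ∀ n : ℤ, IsAbsolutelyClean (A.cycles n)

def IsACAcyclicProjCx (𝔻 : DCh R) : Prop :=
  (∀ n : ℤ, Projective (𝔻.X n)) ∧ (∀ n : ℤ, 𝔻.ExactAt n) ∧
    ∀ L : Ch R, IsLevelComplex L → HomIntoExact 𝔻 L

noncomputable def IsGorACProj (X : Ch R) : Prop :=
  ∃ 𝔻 : DCh R, IsACAcyclicProjCx 𝔻 ∧ Nonempty (X ≅ kernel (𝔻.d 0 (-1)))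

/-- A Ding projective chain complex. -/
noncomputable def IsDingProjCx (X : Ch R) : Prop :=
  ∃ 𝔻 : DCh R,
    (∀ n : ℤ, Projective (𝔻.X n)) ∧ (∀ n : ℤ, 𝔻.ExactAt n) ∧
      (∀ F : Ch R, IsFlatComplex F → HomIntoExact 𝔻 F) ∧
      Nonempty (X ≅ kernel (𝔻.d 0 (-1)))

/-- A Gorenstein projective chain complex. -/
noncomputable def IsGorProjCx (X : Ch R) : Prop :=
  ∃ 𝔻 : DCh R,
    (∀ n : ℤ, Projective (𝔻.X n)) ∧ (∀ n : ℤ, 𝔻.ExactAt n) ∧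
      (∀ Q : Ch R, Projective Q → HomIntoExact 𝔻 Q) ∧
      Nonempty (X ≅ kernel (𝔻.d 0 (-1)))

/-- A Gorenstein AC-injective chain complex. -/
noncomputable def IsGorACInj (X : Ch R) : Prop :=
  ∃ 𝕀 : DCh R,
    (∀ n : ℤ, Injective (𝕀.X n)) ∧ (∀ n : ℤ, 𝕀.ExactAt n) ∧
      (∀ A : Ch R, IsAbsCleanComplex A → HomFromExact 𝕀 A) ∧
      Nonempty (X ≅ kernel (𝕀.d 0 (-1)))

/-- A Gorenstein injective chain complex. -/
noncomputable def IsGorInjCx (X : Ch R) : Prop :=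
  ∃ 𝕀 : DCh R,
    (∀ n : ℤ, Injective (𝕀.X n)) ∧ (∀ n : ℤ, 𝕀.ExactAt n) ∧
      (∀ E : Ch R, Injective E → HomFromExact 𝕀 E) ∧
      Nonempty (X ≅ kernel (𝕀.d 0 (-1)))

def chCard (X : Ch R) : Cardinal := Cardinal.mk (Σ n : ℤ, X.X n)

def dchCard (𝕏 : DCh R) : Cardinal := Cardinal.mk (Σ (n : ℤ) (k : ℤ), (𝕏.X n).X k)

end Complexes






variable {R : Type} [Ring R]

lemma mc_comp_apply {A B C : ModuleCat R} (f : A ⟶ B) (g : B ⟶ C) (x : A) :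
    (f ≫ g) x = g (f x) := rfl

lemma mc_zero_apply {A B : ModuleCat R} (x : A) : (0 : A ⟶ B) x = 0 := rfl

/-- A subcomplex of a chain complex of modules: a family of submodules preserved
by the differentials. -/
structure SubCx (X : Ch R) where
  N : ∀ n : ℤ, Submodule R (X.X n)
  d_mem : ∀ (i j : ℤ), ∀ x ∈ N i, X.d i j x ∈ N j

instance (X : Ch R) : LE (SubCx X) := ⟨fun Q Q' => ∀ n, Q.N n ≤ Q'.N n⟩

/-- A subcomplex, regarded as a chain complex in its own right. -/
noncomputable def SubCx.toCh {X : Ch R} (Q : SubCx X) : Ch R where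
  X n := ModuleCat.of R (Q.N n)
  d i j := ModuleCat.ofHom ((X.d i j).hom.restrict (Q.d_mem i j))
  shape i j h := by
    refine ModuleCat.hom_ext (LinearMap.ext fun x => Subtype.ext ?_)
    have h0 : X.d i j = 0 := X.shape i j h
    show X.d i j x.1 = _
    rw [h0]
    rfl
  d_comp_d' i j k _ _ := by
    refine ModuleCat.hom_ext (LinearMap.ext fun x => Subtype.ext ?_)
    have h0 : X.d j k (X.d i j x.1) = 0 := by
      rw [← mc_comp_apply, X.d_comp_d i j k, mc_zero_apply]
    exact h0

/-- The inclusion of a smaller subcomplex into a larger one. -/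
noncomputable def SubCx.incl {X : Ch R} {Q Q' : SubCx X} (h : Q ≤ Q') :
    Q.toCh ⟶ Q'.toCh where
  f n := ModuleCat.ofHom (Submodule.inclusion (h n))
  comm' i j _ := by
    refine ModuleCat.hom_ext (LinearMap.ext fun x => Subtype.ext ?_)
    rfl

/-- `M` is a transfinite extension (continuous union) of complexes from `S`. -/
noncomputable def IsTransfiniteExtension (S : Set (Ch R)) (M : Ch R) : Prop :=
  ∃ (lam : Ordinal.{0}) (Q : ∀ α : Ordinal, α ≤ lam → SubCx M)
    (mono : ∀ (α α' : Ordinal.{0}) (h : α ≤ α') (h' : α' ≤ lam), Q α (h.trans h') ≤ Q α' h'),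
    ((Q 0 zero_le).toCh ∈ S) ∧
    (∀ (α : Ordinal.{0}) (h : α < lam),
      cokernel (SubCx.incl (mono α (Order.succ α) (Order.le_succ α) (Order.succ_le_of_lt h)))
        ∈ S) ∧
    (∀ (γ : Ordinal.{0}) (h : γ ≤ lam), Order.IsSuccLimit γ →
      ∀ n : ℤ, (Q γ h).N n = ⨆ (α : Ordinal.{0}) (hα : α < γ), (Q α (hα.le.trans h)).N n) ∧
    (∀ n : ℤ, (Q lam le_rfl).N n = ⊤)






variable {R : Type} [Ring R]


/-- A sub-double-complex of a double complex `𝕏`: a family of submodules preserved by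
the inner and outer differentials. -/
structure SubDCx (𝕏 : DCh R) where
  N : ∀ (n k : ℤ), Submodule R ((𝕏.X n).X k)
  d_inner_mem : ∀ (n i j : ℤ), ∀ x ∈ N n i, (𝕏.X n).d i j x ∈ N n j
  d_outer_mem : ∀ (i j k : ℤ), ∀ x ∈ N i k, (𝕏.d i j).f k x ∈ N j k

instance (𝕏 : DCh R) : LE (SubDCx 𝕏) := ⟨fun Q Q' => ∀ n k, Q.N n k ≤ Q'.N n k⟩

/-- Row `n` of a sub-double-complex, as a chain complex. -/
noncomputable def SubDCx.row {𝕏 : DCh R} (Q : SubDCx 𝕏) (n : ℤ) : Ch R where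
  X k := ModuleCat.of R (Q.N n k)
  d i j := ModuleCat.ofHom (((𝕏.X n).d i j).hom.restrict (Q.d_inner_mem n i j))
  shape i j h := by
    refine ModuleCat.hom_ext (LinearMap.ext fun x => Subtype.ext ?_)
    show (𝕏.X n).d i j x.1 = _
    rw [(𝕏.X n).shape i j h]
    rfl
  d_comp_d' i j k _ _ := by
    refine ModuleCat.hom_ext (LinearMap.ext fun x => Subtype.ext ?_)
    have h0 : (𝕏.X n).d j k ((𝕏.X n).d i j x.1) = 0 := by
      rw [← mc_comp_apply, (𝕏.X n).d_comp_d i j k, mc_zero_apply]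
    exact h0

/-- A sub-double-complex, regarded as a double complex in its own right. -/
noncomputable def SubDCx.toDCh {𝕏 : DCh R} (Q : SubDCx 𝕏) : DCh R where
  X n := Q.row n
  d i j :=
    { f := fun k => ModuleCat.ofHom (((𝕏.d i j).f k).hom.restrict (Q.d_outer_mem i j k))
      comm' := fun a b _ => by
        refine ModuleCat.hom_ext (LinearMap.ext fun x => Subtype.ext ?_)
        have h0 := DFunLike.congr_fun (congrArg ModuleCat.Hom.hom ((𝕏.d i j).comm a b)) x.1
        exact h0 }
  shape i j h := by
    have h0 : 𝕏.d i j = 0 := 𝕏.shape i j h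
    refine HomologicalComplex.hom_ext _ _ fun k => ModuleCat.hom_ext (LinearMap.ext fun x => Subtype.ext ?_)
    show (𝕏.d i j).f k x.1 = _
    rw [h0]
    rfl
  d_comp_d' i j k _ _ := by
    refine HomologicalComplex.hom_ext _ _ fun m => ModuleCat.hom_ext (LinearMap.ext fun x => Subtype.ext ?_)
    have h0 : (𝕏.d j k).f m ((𝕏.d i j).f m x.1) = 0 := by
      have hdd := 𝕏.d_comp_d i j k
      calc (𝕏.d j k).f m ((𝕏.d i j).f m x.1) = ((𝕏.d i j ≫ 𝕏.d j k).f m) x.1 := rfl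
        _ = ((0 : 𝕏.X i ⟶ 𝕏.X k).f m) x.1 := by rw [hdd]
        _ = 0 := rfl
    exact h0


variable {R : Type} [Ring R]

/-- The inclusion of a smaller sub-double-complex into a larger one. -/
noncomputable def SubDCx.incl {𝕏 : DCh R} {Q Q' : SubDCx 𝕏} (h : Q ≤ Q') :
    Q.toDCh ⟶ Q'.toDCh where
  f n :=
    { f := fun k => ModuleCat.ofHom (Submodule.inclusion (h n k))
      comm' := fun i j _ => ModuleCat.hom_ext (LinearMap.ext fun x => Subtype.ext rfl) }
  comm' := fun i j _ =>
    HomologicalComplex.hom_ext _ _ fun k => ModuleCat.hom_ext (LinearMap.ext fun x => Subtype.ext rfl)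






section HomCx
variable {𝒜 : Type u} [Category.{v} 𝒜] [Abelian 𝒜]

/-- The degree-`n` part of the Hom-complex `Hom(X, Y)`:
families of maps `X_p ⟶ Y_{p+n}`. -/
abbrev HChain (X Y : ChainComplex 𝒜 ℤ) (n : ℤ) :=
  ∀ p : ℤ, X.X p ⟶ Y.X (p + n)

/-- The differential of the Hom-complex, `(δ f)_p = d_{p+m} ∘ f_p - (-1)^m f_{p-1} ∘ d_p`. -/
noncomputable def hδ (X Y : ChainComplex 𝒜 ℤ) (m n : ℤ) : HChain X Y m →+ HChain X Y n :=
  AddMonoidHom.mk'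
    (fun f p =>
      f p ≫ Y.d (p + m) (p + n) -
        (m.negOnePow : ℤ) •
          (X.d p (p + n - m) ≫ f (p + n - m) ≫ eqToHom (congrArg Y.X (by omega))))
    (by
      intro f g
      funext p
      simp only [Pi.add_apply, Preadditive.add_comp, Preadditive.comp_add, smul_add]
      abel)

/-- The `n`-th homology of the Hom-complex `Hom(X,Y)`, presented as
(cycles)/(boundaries). -/
noncomputable def homCxHomology (X Y : ChainComplex 𝒜 ℤ) (n : ℤ) : Type v :=
  (hδ X Y n (n - 1)).ker ⧸
    ((hδ X Y (n + 1) n).range.comap (hδ X Y n (n - 1)).ker.subtype)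

noncomputable instance (X Y : ChainComplex 𝒜 ℤ) (n : ℤ) : AddCommGroup (homCxHomology X Y n) := by
  unfold homCxHomology; infer_instance

/-- The suspension `Σⁿ Y`, with `(Σⁿ Y)_k = Y_{k-n}` and differential `(-1)ⁿ d`. -/
noncomputable def shiftC (n : ℤ) (Y : ChainComplex 𝒜 ℤ) : ChainComplex 𝒜 ℤ where
  X k := Y.X (k - n)
  d i j := (n.negOnePow : ℤ) • Y.d (i - n) (j - n)
  shape i j h := by
    try dsimp only
    rw [Y.shape, smul_zero]
    simp only [ComplexShape.down_Rel] at h ⊢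
    omega
  d_comp_d' i j k _ _ := by
    rw [Preadditive.zsmul_comp, Preadditive.comp_zsmul, Y.d_comp_d, smul_zero, smul_zero]

/-- The group of chain homotopy classes of chain maps, i.e. hom-groups in the
homotopy category `K(𝒜)`. -/
noncomputable def htpyClasses (Z W : ChainComplex 𝒜 ℤ) : Type v :=
  (HomotopyCategory.quotient 𝒜 (ComplexShape.down ℤ)).obj Z ⟶
    (HomotopyCategory.quotient 𝒜 (ComplexShape.down ℤ)).obj W

noncomputable instance (Z W : ChainComplex 𝒜 ℤ) : AddCommGroup (htpyClasses Z W) := by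
  unfold htpyClasses; infer_instance

/-- A degreewise split extension of `X` by `Y`. -/
structure DWExtension (X Y : ChainComplex 𝒜 ℤ) where
  Z : ChainComplex 𝒜 ℤ
  i : Y ⟶ Z
  p : Z ⟶ X
  w : i ≫ p = 0
  shortExact : (ShortComplex.mk i p w).ShortExact
  dwSplit : ∀ k : ℤ, ∃ r : Z.X k ⟶ Y.X k, i.f k ≫ r = 𝟙 (Y.X k)

/-- Equivalence of extensions (the Yoneda equivalence relation on `Ext¹`). -/
def DWExtension.equivRel {X Y : ChainComplex 𝒜 ℤ} (E E' : DWExtension X Y) : Prop :=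
  ∃ φ : E.Z ≅ E'.Z, E.i ≫ φ.hom = E'.i ∧ φ.hom ≫ E'.p = E.p

instance dwSetoid (X Y : ChainComplex 𝒜 ℤ) : Setoid (DWExtension X Y) where
  r := DWExtension.equivRel
  iseqv := by
    constructor
    · intro E
      exact ⟨Iso.refl _, by simp, by simp⟩
    · rintro E E' ⟨φ, h1, h2⟩
      refine ⟨φ.symm, ?_, ?_⟩
      · rw [← h1]; simp
      · rw [← h2]; simp
    · rintro E E' E'' ⟨φ, h1, h2⟩ ⟨ψ, h3, h4⟩
      refine ⟨φ ≪≫ ψ, ?_, ?_⟩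
      · simp [reassoc_of% h1, h3]
      · simp [h4, h2]

/-- The pointed set of equivalence classes of degreewise split extensions of `X` by `Y`;
this is `Ext¹_dw(X, Y)`. -/
def DWExtClasses (X Y : ChainComplex 𝒜 ℤ) : Type (max u v) :=
  Quotient (dwSetoid X Y)


end HomCx



section HLP

variable {𝒜 : Type u} [Category.{v} 𝒜] [Abelian 𝒜]

namespace HLP

variable (X Y : ChainComplex 𝒜 ℤ)

lemma eps_eps (n : ℤ) {A B : 𝒜} (g : A ⟶ B) :
    (n.negOnePow : ℤ) • (n.negOnePow : ℤ) • g = g := by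
  rw [smul_smul, ← Units.val_mul, Int.units_mul_self, Units.val_one, one_smul]

lemma dC (Z : ChainComplex 𝒜 ℤ) {i j i' j' : ℤ} (hi : i = i') (hj : j = j') :
    Z.d i j = eqToHom (congrArg Z.X hi) ≫ Z.d i' j' ≫ eqToHom (congrArg Z.X hj.symm) := by
  subst hi; subst hj; simp

/-- congruence for families of morphisms indexed by `ℤ`. -/
lemma pC {F G : ℤ → 𝒜} (v : ∀ k, F k ⟶ G k) {a b : ℤ} (h : a = b) :
    v a = eqToHom (congrArg F h) ≫ v b ≫ eqToHom (congrArg G h.symm) := by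
  subst h; simp

variable {X Y}

lemma fCg {n : ℤ} (f : HChain X Y n) {p p' : ℤ} (h : p = p') :
    f p = eqToHom (congrArg X.X h) ≫ f p' ≫
      eqToHom (congrArg Y.X (show p' + n = p + n by rw [h])) := by
  subst h; simp

lemma hfC {C D : ChainComplex 𝒜 ℤ} (g : C ⟶ D) {p p' : ℤ} (h : p = p') :
    g.f p = eqToHom (congrArg C.X h) ≫ g.f p' ≫ eqToHom (congrArg D.X h.symm) := by
  subst h; simp

lemma hfC2 {m : ℤ} (g : shiftC m X ⟶ Y) {p p' : ℤ} (h : p = p') :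
    g.f p = (show X.X (p - m) ⟶ Y.X p from
      eqToHom (congrArg X.X (show p - m = p' - m by rw [h])) ≫ g.f p' ≫
        eqToHom (congrArg Y.X h.symm)) := by
  subst h; simp
  exact (Category.comp_id _).symm

/-- Normalized cycle condition for the Hom-complex. -/
def IsCyc (n : ℤ) (f : HChain X Y n) : Prop :=
  ∀ p q, q + 1 = p →
    f p ≫ Y.d (p + n) (q + n) = (n.negOnePow : ℤ) • (X.d p q ≫ f q)

lemma hδ_eq (n : ℤ) (f : HChain X Y n) (p q : ℤ) (hq : q + 1 = p) :
    hδ X Y n (n - 1) f p =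
      (f p ≫ Y.d (p + n) (q + n) - (n.negOnePow : ℤ) • (X.d p q ≫ f q)) ≫
        eqToHom (congrArg Y.X (show q + n = p + (n - 1) by omega)) := by
  have e1 : p + (n - 1) = q + n := by omega
  have e2 : p + (n - 1) - n = q := by omega
  show f p ≫ Y.d (p + n) (p + (n - 1)) -
      (n.negOnePow : ℤ) • (X.d p (p + (n - 1) - n) ≫ f (p + (n - 1) - n) ≫
        eqToHom (congrArg Y.X (by omega))) = _
  rw [dC Y (rfl : p + n = p + n) e1, dC X (rfl : p = p) e2, fCg f e2]
  simp [Preadditive.sub_comp, Preadditive.zsmul_comp, Preadditive.comp_zsmul]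

lemma cyc_iff (n : ℤ) (f : HChain X Y n) :
    f ∈ (hδ X Y n (n - 1)).ker ↔ IsCyc n f := by
  rw [AddMonoidHom.mem_ker]
  constructor
  · intro h p q hq
    have h0 := congrFun h p
    rw [hδ_eq n f p q hq] at h0
    have h1 : (f p ≫ Y.d (p + n) (q + n) - (n.negOnePow : ℤ) • (X.d p q ≫ f q)) = 0 := by
      apply (cancel_mono (eqToHom (congrArg Y.X (show q + n = p + (n - 1) by omega)))).mp
      rw [h0]; simp
    rw [sub_eq_zero] at h1
    exact h1
  · intro h
    funext p
    rw [hδ_eq n f p (p - 1) (by omega), h p (p - 1) (by omega)]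
    simp

lemma hδ_eq' (n : ℤ) (u : HChain X Y (n + 1)) (p q : ℤ) (hq : q + 1 = p) :
    hδ X Y (n + 1) n u p =
      u p ≫ Y.d (p + (n + 1)) (p + n) +
        (n.negOnePow : ℤ) • (X.d p q ≫ u q ≫
          eqToHom (congrArg Y.X (show q + (n + 1) = p + n by omega))) := by
  have e2 : p + n - (n + 1) = q := by omega
  show u p ≫ Y.d (p + (n + 1)) (p + n) -
      ((n + 1).negOnePow : ℤ) • (X.d p (p + n - (n + 1)) ≫ u (p + n - (n + 1)) ≫
        eqToHom (congrArg Y.X (by omega))) = _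
  rw [dC X (rfl : p = p) e2, fCg u e2, Int.negOnePow_succ]
  simp only [Units.val_neg, neg_smul, sub_neg_eq_add, Category.assoc, eqToHom_trans,
    eqToHom_trans_assoc, eqToHom_refl, Category.id_comp, Category.comp_id]

variable (X Y) in
/-- Conversion of the differential of `shiftC (-n) Y` to that of `Y`. -/
lemma Wd_eq (n a b : ℤ) :
    (shiftC (-n) Y).d a b = (n.negOnePow : ℤ) •
      (eqToHom (show (shiftC (-n) Y).X a = Y.X (a + n) from congrArg Y.X (by omega)) ≫
        Y.d (a + n) (b + n) ≫
        eqToHom (show Y.X (b + n) = (shiftC (-n) Y).X b from congrArg Y.X (by omega))) := by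
  show ((-n).negOnePow : ℤ) • Y.d (a - -n) (b - -n) = _
  rw [Int.negOnePow_neg, dC Y (show a - -n = a + n by omega) (show b - -n = b + n by omega)]
  rfl

variable (X Y) in
/-- Conversion of the differential of `shiftC (-n-1) Y` to that of `Y`. -/
lemma Bd_eq (n a b : ℤ) :
    (shiftC (-n - 1) Y).d a b = -((n.negOnePow : ℤ)) •
      (eqToHom (show (shiftC (-n - 1) Y).X a = Y.X (a + n + 1) from congrArg Y.X (by omega)) ≫
        Y.d (a + n + 1) (b + n + 1) ≫
        eqToHom (show Y.X (b + n + 1) = (shiftC (-n - 1) Y).X b from congrArg Y.X (by omega)))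
    := by
  show ((-n - 1).negOnePow : ℤ) • Y.d (a - (-n - 1)) (b - (-n - 1)) = _
  have hs : ((-n - 1 : ℤ).negOnePow : ℤ) = -((n.negOnePow : ℤ)) := by
    rw [show (-n - 1 : ℤ) = -(n + 1) by ring, Int.negOnePow_neg, Int.negOnePow_succ]
    simp
  rw [hs, dC Y (show a - (-n - 1) = a + n + 1 by omega)
    (show b - (-n - 1) = b + n + 1 by omega)]
  rfl

variable (X Y) in
/-- Conversion of the differential of `shiftC m X` to that of `X`. -/
lemma Sd_eq (m a b : ℤ) :
    (shiftC m X).d a b = (m.negOnePow : ℤ) • X.d (a - m) (b - m) := rfl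

/-! ### Chain maps `X ⟶ shiftC (-n) Y` vs cycles -/

noncomputable def toMp (n : ℤ) (f : HChain X Y n) (hf : IsCyc n f) : X ⟶ shiftC (-n) Y where
  f p := f p ≫ eqToHom (show Y.X (p + n) = (shiftC (-n) Y).X p from congrArg Y.X (by omega))
  comm' i j hij := by
    simp only [ComplexShape.down_Rel] at hij
    rw [Wd_eq Y n i j]
    simp only [Preadditive.comp_zsmul, Preadditive.zsmul_comp, Category.assoc, eqToHom_trans,
      eqToHom_trans_assoc, eqToHom_refl, Category.id_comp, Category.comp_id]
    rw [← Category.assoc (f i), hf i j hij]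
    simp only [Preadditive.zsmul_comp, Category.assoc, smul_smul, ← Units.val_mul,
      Int.units_mul_self, Units.val_one, one_smul]

noncomputable def ofMp (n : ℤ) (g : X ⟶ shiftC (-n) Y) : HChain X Y n :=
  fun p => g.f p ≫
    eqToHom (show (shiftC (-n) Y).X p = Y.X (p + n) from congrArg Y.X (by omega))

lemma ofMp_cyc (n : ℤ) (g : X ⟶ shiftC (-n) Y) : IsCyc n (ofMp n g) := by
  intro p q hq
  have hc := g.comm p q
  show (g.f p ≫ eqToHom (show (shiftC (-n) Y).X p = Y.X (p + n) from congrArg Y.X (by omega)))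
      ≫ Y.d (p + n) (q + n) = (n.negOnePow : ℤ) • (X.d p q ≫ g.f q ≫ _)
  have key : (g.f p ≫
        eqToHom (show (shiftC (-n) Y).X p = Y.X (p + n) from congrArg Y.X (by omega))) ≫
        Y.d (p + n) (q + n) =
      (n.negOnePow : ℤ) • ((g.f p ≫ (shiftC (-n) Y).d p q) ≫
        eqToHom (show (shiftC (-n) Y).X q = Y.X (q + n) from congrArg Y.X (by omega))) := by
    rw [Wd_eq Y n p q]
    simp only [Preadditive.comp_zsmul, Preadditive.zsmul_comp, Category.assoc, eqToHom_trans,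
      eqToHom_trans_assoc, eqToHom_refl, Category.id_comp, Category.comp_id, smul_smul,
      ← Units.val_mul, Int.units_mul_self, Units.val_one, one_smul]
  rw [key, hc]
  simp only [Category.assoc]

lemma toMp_ofMp (n : ℤ) (g : X ⟶ shiftC (-n) Y) (hc : IsCyc n (ofMp n g)) :
    toMp n (ofMp n g) hc = g := by
  apply HomologicalComplex.hom_ext
  intro p
  show (g.f p ≫ _) ≫ _ = g.f p
  simp [eqToHom_trans]

lemma ofMp_toMp (n : ℤ) (f : HChain X Y n) (hf : IsCyc n f) :
    ofMp n (toMp n f hf) = f := by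
  funext p
  show (f p ≫ _) ≫ _ = f p
  simp [eqToHom_trans]

lemma toMp_add (n : ℤ) (f g : HChain X Y n) (hf : IsCyc n f) (hg : IsCyc n g)
    (hfg : IsCyc n (f + g)) :
    toMp n (f + g) hfg = toMp n f hf + toMp n g hg := by
  apply HomologicalComplex.hom_ext
  intro p
  show (f p + g p) ≫ _ = _
  rw [Preadditive.add_comp]
  rfl

/-! ### Homotopies vs boundaries, for `X ⟶ shiftC (-n) Y` -/

noncomputable def homotopyOfBoundary (n : ℤ) (f : HChain X Y n) (hf : IsCyc n f)
    (u : HChain X Y (n + 1)) (hu : hδ X Y (n + 1) n u = f) :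
    Homotopy (toMp n f hf) (0 : X ⟶ shiftC (-n) Y) where
  hom i j := if h : i + 1 = j then
      (n.negOnePow : ℤ) • (u i ≫
        eqToHom (show Y.X (i + (n + 1)) = (shiftC (-n) Y).X j from congrArg Y.X (by omega)))
    else 0
  zero i j h := by
    rw [dif_neg]
    intro hc
    exact h (by simpa [ComplexShape.down_Rel] using hc)
  comm i := by
    rw [dNext_eq _ (show (ComplexShape.down ℤ).Rel i (i - 1) by simp),
      prevD_eq _ (show (ComplexShape.down ℤ).Rel (i + 1) i by simp)]
    rw [dif_pos (show (i - 1) + 1 = i by omega), dif_pos rfl]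
    have h0 := congrFun hu i
    rw [hδ_eq' n u i (i - 1) (by omega)] at h0
    show (toMp n f hf).f i = _ + _ + (0 : X ⟶ shiftC (-n) Y).f i
    rw [HomologicalComplex.zero_f_apply, add_zero]
    show f i ≫ _ = _
    rw [← h0, Wd_eq Y n (i + 1) i, dC Y (show i + 1 + n = i + (n + 1) by omega)
      (rfl : i + n = i + n)]
    simp only [Preadditive.add_comp, Preadditive.zsmul_comp, Preadditive.comp_zsmul,
      Category.assoc, eqToHom_trans, eqToHom_trans_assoc, eqToHom_refl, Category.comp_id,
      Category.id_comp, smul_smul, ← Units.val_mul, Int.units_mul_self, Units.val_one, one_smul]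
    rw [add_comm]

noncomputable def boundaryOfHomotopy (n : ℤ) (f : HChain X Y n) (hf : IsCyc n f)
    (h : Homotopy (toMp n f hf) (0 : X ⟶ shiftC (-n) Y)) :
    { u : HChain X Y (n + 1) // hδ X Y (n + 1) n u = f } := by
  refine ⟨fun p => (n.negOnePow : ℤ) • (h.hom p (p + 1) ≫
    eqToHom (show (shiftC (-n) Y).X (p + 1) = Y.X (p + (n + 1)) from congrArg Y.X (by omega))),
    ?_⟩
  funext p
  rw [hδ_eq' n _ p (p - 1) (by omega)]
  have hc := h.comm p
  rw [dNext_eq _ (show (ComplexShape.down ℤ).Rel p (p - 1) by simp),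
    prevD_eq _ (show (ComplexShape.down ℤ).Rel (p + 1) p by simp),
    HomologicalComplex.zero_f_apply, add_zero] at hc
  have hc' : f p = (toMp n f hf).f p ≫
      eqToHom (show (shiftC (-n) Y).X p = Y.X (p + n) from congrArg Y.X (by omega)) := by
    show f p = (f p ≫ _) ≫ _
    simp [eqToHom_trans]
  rw [hc', hc, pC (h.hom (p - 1)) (show p = p - 1 + 1 by omega), Wd_eq Y n (p + 1) p,
    dC Y (show p + 1 + n = p + (n + 1) by omega) (rfl : p + n = p + n)]
  simp only [Preadditive.add_comp, Preadditive.comp_add, Preadditive.zsmul_comp,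
    Preadditive.comp_zsmul, Category.assoc, eqToHom_trans, eqToHom_trans_assoc, eqToHom_refl,
    Category.comp_id, Category.id_comp, smul_smul, ← Units.val_mul, Int.units_mul_self,
    Units.val_one, one_smul]
  exact add_comm _ _

/-! ### The additive equivalence with homotopy classes -/

variable (X Y) in
noncomputable def ψ (n : ℤ) : (hδ X Y n (n - 1)).ker →+ htpyClasses X (shiftC (-n) Y) :=
  AddMonoidHom.mk' (fun f => (HomotopyCategory.quotient 𝒜 (ComplexShape.down ℤ)).map
    (toMp n f.1 ((cyc_iff n f.1).mp f.2)))
    (by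
      intro f g
      show (HomotopyCategory.quotient 𝒜 (ComplexShape.down ℤ)).map _ =
        (HomotopyCategory.quotient 𝒜 (ComplexShape.down ℤ)).map _ +
        (HomotopyCategory.quotient 𝒜 (ComplexShape.down ℤ)).map _
      refine Eq.trans ?_ (Functor.map_add _)
      congr 1
      exact toMp_add n f.1 g.1 _ _ _)

variable (X Y) in
lemma ψ_surjective (n : ℤ) : Function.Surjective (ψ X Y n) := by
  intro t
  obtain ⟨g, hg⟩ := (HomotopyCategory.quotient 𝒜 (ComplexShape.down ℤ)).map_surjective t
  refine ⟨⟨ofMp n g, (cyc_iff n _).mpr (ofMp_cyc n g)⟩, ?_⟩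
  show (HomotopyCategory.quotient 𝒜 (ComplexShape.down ℤ)).map _ = t
  rw [toMp_ofMp n g]
  exact hg

variable (X Y) in
lemma ψ_eq_zero_iff (n : ℤ) (f : (hδ X Y n (n - 1)).ker) :
    ψ X Y n f = 0 ↔ (f : HChain X Y n) ∈ (hδ X Y (n + 1) n).range := by
  constructor
  · intro h
    have h0 : (HomotopyCategory.quotient 𝒜 (ComplexShape.down ℤ)).map
        (toMp n f.1 ((cyc_iff n f.1).mp f.2)) =
        (HomotopyCategory.quotient 𝒜 (ComplexShape.down ℤ)).map (0 : X ⟶ shiftC (-n) Y) := by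
      rw [Functor.map_zero]
      exact h
    have ht := HomotopyCategory.homotopyOfEq _ _ h0
    obtain ⟨u, hu⟩ := boundaryOfHomotopy n f.1 _ ht
    exact ⟨u, hu⟩
  · rintro ⟨u, hu⟩
    show (HomotopyCategory.quotient 𝒜 (ComplexShape.down ℤ)).map _ = 0
    rw [← Functor.map_zero (HomotopyCategory.quotient 𝒜 (ComplexShape.down ℤ)) X
      (shiftC (-n) Y)]
    exact HomotopyCategory.eq_of_homotopy _ _ (homotopyOfBoundary n f.1 _ u hu)

variable (X Y) in
noncomputable def part1b (n : ℤ) :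
    homCxHomology X Y n ≃+ htpyClasses X (shiftC (-n) Y) := by
  have h0 : ∀ g ∈ ((hδ X Y (n + 1) n).range.comap (hδ X Y n (n - 1)).ker.subtype),
      ψ X Y n g = 0 := by
    intro g hg
    exact (ψ_eq_zero_iff X Y n g).mpr hg
  refine AddEquiv.ofBijective (QuotientAddGroup.lift _ (ψ X Y n) h0) ⟨?_, ?_⟩
  · refine (injective_iff_map_eq_zero _).mpr ?_
    intro a
    refine QuotientAddGroup.induction_on a ?_
    intro g hgz
    refine (QuotientAddGroup.eq_zero_iff _).mpr ?_
    exact AddSubgroup.mem_comap.mpr ((ψ_eq_zero_iff X Y n g).mp hgz)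
  · intro t
    obtain ⟨g, hg⟩ := ψ_surjective X Y n t
    exact ⟨QuotientAddGroup.mk g, hg⟩

/-! ### Chain maps `shiftC m X ⟶ Y` vs cycles -/

noncomputable def toMp2 (m : ℤ) (f : HChain X Y m) (hf : IsCyc m f) : shiftC m X ⟶ Y where
  f p := (show (shiftC m X).X p ⟶ Y.X p from
    f (p - m) ≫ eqToHom (congrArg Y.X (show p - m + m = p by omega)))
  comm' i j hij := by
    simp only [ComplexShape.down_Rel] at hij
    show (f (i - m) ≫ _) ≫ Y.d i j = ((m.negOnePow : ℤ) • X.d (i - m) (j - m)) ≫ _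
    rw [dC Y (show i = (i - m) + m by omega) (show j = (j - m) + m by omega)]
    simp only [Category.assoc, eqToHom_trans, eqToHom_trans_assoc, eqToHom_refl,
      Category.id_comp]
    rw [← Category.assoc (f (i - m)), hf (i - m) (j - m) (by omega)]
    simp [Preadditive.zsmul_comp, Preadditive.comp_zsmul]
    exact (Preadditive.zsmul_comp _ _ _).symm

noncomputable def ofMp2 (m : ℤ) (g : shiftC m X ⟶ Y) : HChain X Y m :=
  fun p => (show X.X p ⟶ Y.X (p + m) from
    eqToHom (congrArg X.X (show p = p + m - m by omega)) ≫ g.f (p + m))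

lemma ofMp2_cyc (m : ℤ) (g : shiftC m X ⟶ Y) : IsCyc m (ofMp2 m g) := by
  intro p q hq
  have hc := g.comm (p + m) (q + m)
  show (eqToHom _ ≫ g.f (p + m)) ≫ Y.d (p + m) (q + m) =
    (m.negOnePow : ℤ) • (X.d p q ≫ eqToHom _ ≫ g.f (q + m))
  rw [Category.assoc, hc]
  show eqToHom _ ≫ ((m.negOnePow : ℤ) • X.d (p + m - m) (q + m - m)) ≫ g.f (q + m) = _
  rw [dC X (show p + m - m = p by omega) (show q + m - m = q by omega)]
  dsimp only [shiftC]
  simp [Preadditive.zsmul_comp, Preadditive.comp_zsmul]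

/-- forward: from exactness to null-homotopy of maps `shiftC m X ⟶ Y`. -/
noncomputable def homotopyOfBoundary2 (m : ℤ) (g : shiftC m X ⟶ Y)
    (u : HChain X Y (m + 1)) (hu : hδ X Y (m + 1) m u = ofMp2 m g) :
    Homotopy g (0 : shiftC m X ⟶ Y) where
  hom i j := if h : i + 1 = j then
      (show (shiftC m X).X i ⟶ Y.X j from
        u (i - m) ≫ eqToHom (congrArg Y.X (show i - m + (m + 1) = j by omega)))
    else 0
  zero i j h := by
    dsimp only
    rw [dif_neg]
    intro hc
    exact h (by simpa [ComplexShape.down_Rel] using hc)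
  comm i := by
    rw [dNext_eq _ (show (ComplexShape.down ℤ).Rel i (i - 1) by simp),
      prevD_eq _ (show (ComplexShape.down ℤ).Rel (i + 1) i by simp)]
    dsimp only
    rw [dif_pos (show (i - 1) + 1 = i by omega), dif_pos rfl]
    rw [HomologicalComplex.zero_f_apply, add_zero]
    have h0 := congrFun hu (i - m)
    rw [hδ_eq' m u (i - m) (i - m - 1) (by omega)] at h0
    have hgf : g.f i = ofMp2 m g (i - m) ≫
        eqToHom (congrArg Y.X (show i - m + m = i by omega)) := by
      rw [hfC2 g (show i = i - m + m by omega)]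
      show _ = (eqToHom _ ≫ g.f (i - m + m)) ≫ _
      dsimp only [shiftC]
      simp [Category.assoc]
    rw [hgf, ← h0, Sd_eq X m i (i - 1),
      dC X (rfl : i - m = i - m) (show i - m - 1 = i - 1 - m by omega),
      pC u (show i - m - 1 = i - 1 - m by omega),
      dC Y (show i + 1 = i - m + (m + 1) by omega) (show i = i - m + m by omega)]
    dsimp only [shiftC]
    simp only [Preadditive.add_comp, Preadditive.comp_add, Preadditive.zsmul_comp,
      Preadditive.comp_zsmul, Category.assoc, eqToHom_trans, eqToHom_trans_assoc,
      eqToHom_refl, Category.comp_id, Category.id_comp]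
    rw [add_comm]
    rfl

lemma pC2S {m : ℤ} (v : ∀ i j, (shiftC m X).X i ⟶ Y.X j) {a b a' b' : ℤ}
    (ha : a = a') (hb : b = b') :
    v a b = (show X.X (a - m) ⟶ Y.X b from
      eqToHom (congrArg X.X (show a - m = a' - m by rw [ha])) ≫ v a' b' ≫
        eqToHom (congrArg Y.X hb.symm)) := by
  subst ha; subst hb; simp
  exact (Category.comp_id _).symm

lemma boundaryOfHomotopy2 (m : ℤ) (f : HChain X Y m) (hf : IsCyc m f)
    (h : Homotopy (toMp2 m f hf) (0 : shiftC m X ⟶ Y)) :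
    ∃ u : HChain X Y (m + 1), hδ X Y (m + 1) m u = f := by
  refine ⟨fun p => (show X.X p ⟶ Y.X (p + (m + 1)) from
    eqToHom (congrArg X.X (show p = p + m - m by omega)) ≫ h.hom (p + m) (p + m + 1) ≫
      eqToHom (congrArg Y.X (show p + m + 1 = p + (m + 1) by omega))), ?_⟩
  funext p
  rw [hδ_eq' m _ p (p - 1) (by omega)]
  have hcomm := h.comm (p + m)
  rw [dNext_eq _ (show (ComplexShape.down ℤ).Rel (p + m) (p + m - 1) by simp),
    prevD_eq _ (show (ComplexShape.down ℤ).Rel (p + m + 1) (p + m) by simp),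
    HomologicalComplex.zero_f_apply, add_zero] at hcomm
  have hc2 : f (p + m - m) =
      ((shiftC m X).d (p + m) (p + m - 1) ≫ h.hom (p + m - 1) (p + m) +
        h.hom (p + m) (p + m + 1) ≫ Y.d (p + m + 1) (p + m)) ≫
        eqToHom (congrArg Y.X (show p + m = p + m - m + m by omega)) := by
    have he : (toMp2 m f hf).f (p + m) = f (p + m - m) ≫
        eqToHom (congrArg Y.X (show p + m - m + m = p + m by omega)) := rfl
    rw [he] at hcomm
    calc f (p + m - m) = (f (p + m - m) ≫
          eqToHom (congrArg Y.X (show p + m - m + m = p + m by omega))) ≫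
          eqToHom (congrArg Y.X (show p + m = p + m - m + m by omega)) := by
          simp [eqToHom_trans]
      _ = _ := by rw [hcomm]; rfl
  rw [fCg f (show p = p + m - m by omega), hc2, Sd_eq X m (p + m) (p + m - 1),
    dC X (show p + m - m = p by omega) (show p + m - 1 - m = p - 1 by omega),
    pC2S h.hom (show p + m - 1 = p - 1 + m by omega) (show p + m = p - 1 + m + 1 by omega),
    dC Y (show p + m + 1 = p + (m + 1) by omega) (rfl : p + m = p + m)]
  dsimp only [shiftC]
  simp only [Preadditive.add_comp, Preadditive.comp_add, Preadditive.zsmul_comp,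
    Preadditive.comp_zsmul, Category.assoc, eqToHom_trans, eqToHom_trans_assoc,
    eqToHom_refl, Category.comp_id, Category.id_comp]
  erw [Preadditive.comp_add, Preadditive.comp_zsmul]
  simp only [eqToHom_trans_assoc, eqToHom_refl, Category.id_comp]
  exact add_comm _ _

variable (X Y) in
lemma part2 :
    (∀ n : ℤ, (hδ X Y n (n - 1)).ker ≤ (hδ X Y (n + 1) n).range) ↔
      ∀ (m : ℤ) (f : shiftC m X ⟶ Y), Nonempty (Homotopy f 0) := by
  constructor
  · intro hex m g
    have hker : ofMp2 m g ∈ (hδ X Y m (m - 1)).ker := (cyc_iff m _).mpr (ofMp2_cyc m g)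
    obtain ⟨u, hu⟩ := hex m hker
    exact ⟨homotopyOfBoundary2 m g u hu⟩
  · intro hnull n f hfker
    have hf : IsCyc n f := (cyc_iff n f).mp hfker
    obtain ⟨h⟩ := hnull n (toMp2 n f hf)
    obtain ⟨u, hu⟩ := boundaryOfHomotopy2 n f hf h
    exact ⟨u, hu⟩

/-! ### Part 1a : degreewise split extensions vs homology of the Hom-complex -/

/-- A degreewise splitting family for a degreewise split extension. -/
structure SplF (B : ChainComplex 𝒜 ℤ) (E : DWExtension X B) where
  r : ∀ k, E.Z.X k ⟶ B.X k
  s : ∀ k, X.X k ⟶ E.Z.X k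
  ir : ∀ k, E.i.f k ≫ r k = 𝟙 (B.X k)
  sp : ∀ k, s k ≫ E.p.f k = 𝟙 (X.X k)
  total : ∀ k, r k ≫ E.i.f k + E.p.f k ≫ s k = 𝟙 (E.Z.X k)

namespace SplF

variable {B : ChainComplex 𝒜 ℤ} {E : DWExtension X B}

lemma rieq (σ : SplF B E) (k : ℤ) :
    σ.r k ≫ E.i.f k = 𝟙 (E.Z.X k) - E.p.f k ≫ σ.s k := by
  have := σ.total k
  rw [← this]; abel

lemma sr (σ : SplF B E) (k : ℤ) : σ.s k ≫ σ.r k = 0 := by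
  have h1 : σ.s k ≫ (σ.r k ≫ E.i.f k) ≫ σ.r k = σ.s k ≫ σ.r k := by
    simp only [Category.assoc]
    rw [σ.ir k, Category.comp_id]
  have h2 : σ.s k ≫ (σ.r k ≫ E.i.f k) ≫ σ.r k = 0 := by
    rw [σ.rieq k]
    simp only [Preadditive.sub_comp, Preadditive.comp_sub, Category.id_comp, Category.assoc]
    rw [← Category.assoc (σ.s k) (E.p.f k), σ.sp k, Category.id_comp, sub_self]
  rw [← h1, h2]

end SplF

/-- Existence of a splitting family. -/
noncomputable def splOf {B : ChainComplex 𝒜 ℤ} (E : DWExtension X B) : SplF B E := by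
  have hdeg := (HomologicalComplex.shortExact_iff_degreewise_shortExact
    (ShortComplex.mk E.i E.p E.w)).mp E.shortExact
  choose r hr using E.dwSplit
  have hzero : ∀ k, E.i.f k ≫ E.p.f k = 0 := fun k => by
    have := congrArg (fun ψ => HomologicalComplex.Hom.f ψ k) E.w
    simpa using this
  have hs : ∀ k, ∃ s : X.X k ⟶ E.Z.X k,
      E.p.f k ≫ s = 𝟙 (E.Z.X k) - r k ≫ E.i.f k := by
    intro k
    have hex := (hdeg k).exact
    have hepi : Epi ((ShortComplex.mk E.i E.p E.w).map
        (HomologicalComplex.eval 𝒜 (ComplexShape.down ℤ) k)).g := (hdeg k).epi_g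
    refine ⟨hex.desc (𝟙 (E.Z.X k) - r k ≫ E.i.f k) ?_, hex.g_desc _ _⟩
    show E.i.f k ≫ (𝟙 (E.Z.X k) - r k ≫ E.i.f k) = 0
    rw [Preadditive.comp_sub, Category.comp_id, ← Category.assoc, hr k, Category.id_comp,
      sub_self]
  choose s hsp using hs
  have hepi : ∀ k, Epi (E.p.f k) := fun k => (hdeg k).epi_g
  refine ⟨r, s, hr, ?_, ?_⟩
  · intro k
    haveI := hepi k
    apply (cancel_epi (E.p.f k)).mp
    rw [← Category.assoc, hsp k]
    simp only [Preadditive.sub_comp, Category.id_comp, Category.comp_id, Category.assoc,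
      hzero k, comp_zero, sub_zero]
  · intro k
    rw [hsp k]
    abel

/-! #### Extraction of a cycle from an extension -/

variable (X Y) in
noncomputable def fOf (n : ℤ) (E : DWExtension X (shiftC (-n - 1) Y))
    (σ : SplF (shiftC (-n - 1) Y) E) : HChain X Y n :=
  fun k => σ.s k ≫ E.Z.d k (k - 1) ≫ σ.r (k - 1) ≫
    eqToHom (show (shiftC (-n - 1) Y).X (k - 1) = Y.X (k + n) from congrArg Y.X (by omega))

lemma key1 {B : ChainComplex 𝒜 ℤ} (E : DWExtension X B) (σ : SplF B E) (p q r' : ℤ) :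
    σ.s p ≫ E.Z.d p q ≫ σ.r q ≫ B.d q r' +
      X.d p q ≫ σ.s q ≫ E.Z.d q r' ≫ σ.r r' = 0 := by
  have e1 : σ.s p ≫ E.Z.d p q ≫ σ.r q ≫ E.i.f q ≫ E.Z.d q r' ≫ σ.r r'
      = σ.s p ≫ E.Z.d p q ≫ σ.r q ≫ B.d q r' := by
    rw [reassoc_of% (E.i.comm q r'), σ.ir r', Category.comp_id]
  have e2 : σ.s p ≫ E.Z.d p q ≫ E.p.f q ≫ σ.s q ≫ E.Z.d q r' ≫ σ.r r'
      = X.d p q ≫ σ.s q ≫ E.Z.d q r' ≫ σ.r r' := by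
    rw [← reassoc_of% (E.p.comm p q), reassoc_of% (σ.sp p)]
  have h1 : σ.s p ≫ E.Z.d p q ≫ (σ.r q ≫ E.i.f q + E.p.f q ≫ σ.s q) ≫
      E.Z.d q r' ≫ σ.r r' = 0 := by
    rw [σ.total q, Category.id_comp]
    simp
  simp only [Preadditive.add_comp, Preadditive.comp_add, Category.assoc] at h1
  rw [e1, e2] at h1
  exact h1

variable (X Y) in
/-- the inverse of `Bd_eq`. -/
lemma Bd_eq' (n a b : ℤ) :
    eqToHom (show (shiftC (-n - 1) Y).X a = Y.X (a + n + 1) from congrArg Y.X (by omega)) ≫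
      Y.d (a + n + 1) (b + n + 1)
    = -((n.negOnePow : ℤ)) • ((shiftC (-n - 1) Y).d a b ≫
        eqToHom (show (shiftC (-n - 1) Y).X b = Y.X (b + n + 1) from
          congrArg Y.X (by omega))) := by
  rw [Bd_eq Y n a b]
  simp only [neg_smul, smul_neg, Preadditive.neg_comp, Preadditive.comp_neg,
    Preadditive.zsmul_comp, Preadditive.comp_zsmul, Category.assoc,
    eqToHom_trans, eqToHom_refl, Category.comp_id, neg_neg, smul_smul]
  rw [neg_mul, ← Units.val_mul, Int.units_mul_self, Units.val_one, neg_smul, one_smul,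
    neg_neg]

variable (X Y) in
/-- reassociated version of `Bd_eq'`. -/
lemma Bd_eq'' (n a b : ℤ) {W : 𝒜} (h : Y.X (b + n + 1) ⟶ W) :
    eqToHom (show (shiftC (-n - 1) Y).X a = Y.X (a + n + 1) from congrArg Y.X (by omega)) ≫
      Y.d (a + n + 1) (b + n + 1) ≫ h
    = -((n.negOnePow : ℤ)) • ((shiftC (-n - 1) Y).d a b ≫
        eqToHom (show (shiftC (-n - 1) Y).X b = Y.X (b + n + 1) from
          congrArg Y.X (by omega)) ≫ h) := by
  rw [← Category.assoc, Bd_eq' Y n a b]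
  simp only [neg_smul, Preadditive.neg_comp, Preadditive.zsmul_comp, Category.assoc]

lemma fOf_cyc (n : ℤ) (E : DWExtension X (shiftC (-n - 1) Y))
    (σ : SplF (shiftC (-n - 1) Y) E) : IsCyc n (fOf X Y n E σ) := by
  intro p q hq
  have hk : σ.s p ≫ E.Z.d p q ≫ σ.r q ≫ (shiftC (-n - 1) Y).d q (q - 1)
      = -(X.d p q ≫ σ.s q ≫ E.Z.d q (q - 1) ≫ σ.r (q - 1)) :=
    eq_neg_of_add_eq_zero_left (key1 E σ p q (q - 1))
  unfold fOf
  rw [dC E.Z (rfl : p = p) (show p - 1 = q by omega), pC σ.r (show p - 1 = q by omega),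
    dC Y (show p + n = q + n + 1 by omega) (show q + n = q - 1 + n + 1 by omega)]
  simp only [Category.assoc, eqToHom_trans, eqToHom_trans_assoc, eqToHom_refl,
    Category.id_comp, Category.comp_id]
  rw [Bd_eq'' Y n q (q - 1)]
  simp only [neg_smul, smul_neg, Preadditive.comp_neg, Preadditive.neg_comp,
    Preadditive.zsmul_comp, Preadditive.comp_zsmul]
  rw [reassoc_of% hk]
  simp only [Preadditive.neg_comp, Preadditive.comp_neg, smul_neg, neg_smul, neg_neg,
    Category.assoc, eqToHom_trans, eqToHom_trans_assoc]

lemma fOf_mem_ker (n : ℤ) (E : DWExtension X (shiftC (-n - 1) Y))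
    (σ : SplF (shiftC (-n - 1) Y) E) :
    fOf X Y n E σ ∈ (hδ X Y n (n - 1)).ker :=
  (cyc_iff n _).mpr (fOf_cyc n E σ)

/-! #### Independence of the splitting family -/

lemma key2 {B : ChainComplex 𝒜 ℤ} (E : DWExtension X B) (σ τ : SplF B E) (p q : ℤ) :
    τ.s p ≫ E.Z.d p q ≫ τ.r q - σ.s p ≫ E.Z.d p q ≫ σ.r q
      = (τ.s p ≫ σ.r p) ≫ B.d p q - X.d p q ≫ (τ.s q ≫ σ.r q) := by
  have hip : ∀ k : ℤ, E.i.f k ≫ E.p.f k = 0 := fun k => by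
    have := congrArg (fun ψ => HomologicalComplex.Hom.f ψ k) E.w
    simpa using this
  have hw : ∀ k, τ.r k - σ.r k = E.p.f k ≫ (σ.s k ≫ (τ.r k - σ.r k)) := by
    intro k
    have h : (σ.r k ≫ E.i.f k + E.p.f k ≫ σ.s k) ≫ (τ.r k - σ.r k)
        = 𝟙 _ ≫ (τ.r k - σ.r k) := by rw [σ.total k]
    rw [Preadditive.add_comp, Category.id_comp] at h
    have h2 : (σ.r k ≫ E.i.f k) ≫ (τ.r k - σ.r k) = 0 := by
      rw [Category.assoc, Preadditive.comp_sub, σ.ir k, τ.ir k, sub_self, comp_zero]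
    rw [h2, zero_add, Category.assoc] at h
    exact h.symm
  have hv : ∀ k, τ.s k - σ.s k = ((τ.s k - σ.s k) ≫ σ.r k) ≫ E.i.f k := by
    intro k
    have h : (τ.s k - σ.s k) ≫ (σ.r k ≫ E.i.f k + E.p.f k ≫ σ.s k)
        = (τ.s k - σ.s k) ≫ 𝟙 _ := by rw [σ.total k]
    rw [Preadditive.comp_add, Category.comp_id] at h
    have h2 : (τ.s k - σ.s k) ≫ (E.p.f k ≫ σ.s k) = 0 := by
      rw [← Category.assoc, Preadditive.sub_comp, σ.sp k, τ.sp k, sub_self, zero_comp]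
    rw [h2, add_zero, ← Category.assoc] at h
    exact h.symm
  have hortho : ∀ k, (τ.s k - σ.s k) ≫ (τ.r k - σ.r k) = 0 := by
    intro k
    rw [hv k, hw k]
    calc (((τ.s k - σ.s k) ≫ σ.r k) ≫ E.i.f k) ≫ E.p.f k ≫ (σ.s k ≫ (τ.r k - σ.r k))
        = ((τ.s k - σ.s k) ≫ σ.r k) ≫ (E.i.f k ≫ E.p.f k) ≫ (σ.s k ≫ (τ.r k - σ.r k)) := by
          simp only [Category.assoc]
      _ = 0 := by rw [hip k, zero_comp, comp_zero]
  have hveq : ∀ k, τ.s k ≫ σ.r k = -(σ.s k ≫ τ.r k) := by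
    intro k
    have h := hortho k
    simp only [Preadditive.sub_comp, Preadditive.comp_sub] at h
    rw [σ.sr k, τ.sr k, sub_zero, zero_sub] at h
    have h3 : σ.s k ≫ τ.r k + τ.s k ≫ σ.r k = 0 := by
      rw [← neg_eq_zero, neg_add]
      rw [sub_eq_add_neg] at h
      exact h
    rw [eq_neg_iff_add_eq_zero, add_comm]
    exact h3
  have split : τ.s p ≫ E.Z.d p q ≫ τ.r q - σ.s p ≫ E.Z.d p q ≫ σ.r q
      = τ.s p ≫ E.Z.d p q ≫ (τ.r q - σ.r q) + (τ.s p - σ.s p) ≫ E.Z.d p q ≫ σ.r q := by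
    simp only [Preadditive.comp_sub, Preadditive.sub_comp]
    abel
  have c1 : σ.s q ≫ (τ.r q - σ.r q) = -(τ.s q ≫ σ.r q) := by
    rw [Preadditive.comp_sub, σ.sr q, sub_zero, hveq q, neg_neg]
  have t1 : τ.s p ≫ E.Z.d p q ≫ (τ.r q - σ.r q) = -(X.d p q ≫ τ.s q ≫ σ.r q) := by
    rw [hw q, c1, ← reassoc_of% (E.p.comm p q), reassoc_of% (τ.sp p)]
    simp only [Category.id_comp, Preadditive.comp_neg]
  have t2 : (τ.s p - σ.s p) ≫ E.Z.d p q ≫ σ.r q = (τ.s p ≫ σ.r p) ≫ B.d p q := by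
    rw [hv p, Category.assoc, reassoc_of% (E.i.comm p q), σ.ir q, Category.comp_id]
    rw [Preadditive.sub_comp, σ.sr p, sub_zero]
  rw [split, t1, t2]
  abel

lemma fOf_indep (n : ℤ) (E : DWExtension X (shiftC (-n - 1) Y))
    (σ τ : SplF (shiftC (-n - 1) Y) E) :
    ∃ u : HChain X Y (n + 1),
      hδ X Y (n + 1) n u = fun k => fOf X Y n E τ k - fOf X Y n E σ k := by
  refine ⟨fun k => -((n.negOnePow : ℤ)) • ((τ.s k ≫ σ.r k) ≫
    eqToHom (show (shiftC (-n - 1) Y).X k = Y.X (k + (n + 1)) from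
      congrArg Y.X (by omega))), ?_⟩
  funext p
  rw [hδ_eq' n _ p (p - 1) (by omega)]
  show (-((n.negOnePow : ℤ)) • ((τ.s p ≫ σ.r p) ≫ eqToHom _)) ≫ Y.d (p + (n + 1)) (p + n) +
      (n.negOnePow : ℤ) • (X.d p (p - 1) ≫
        (-((n.negOnePow : ℤ)) • ((τ.s (p - 1) ≫ σ.r (p - 1)) ≫ eqToHom _)) ≫ eqToHom _) =
      fOf X Y n E τ p - fOf X Y n E σ p
  rw [dC Y (show p + (n + 1) = p + n + 1 by omega) (show p + n = p - 1 + n + 1 by omega)]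
  simp only [Preadditive.zsmul_comp, Preadditive.comp_zsmul, neg_smul, smul_neg,
    Preadditive.neg_comp, Preadditive.comp_neg, Category.assoc, eqToHom_trans,
    eqToHom_trans_assoc, eqToHom_refl, Category.id_comp, Category.comp_id]
  rw [Bd_eq'' Y n p (p - 1)]
  simp only [Preadditive.zsmul_comp, Preadditive.comp_zsmul, neg_smul, smul_neg,
    Preadditive.neg_comp, Preadditive.comp_neg, neg_neg, Category.assoc, smul_smul,
    ← Units.val_mul, Int.units_mul_self, Units.val_one, one_smul, eqToHom_trans,
    eqToHom_trans_assoc]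
  have hk2 := congrArg (fun t => t ≫ eqToHom
    (show (shiftC (-n - 1) Y).X (p - 1) = Y.X (p + n) from congrArg Y.X (by omega)))
    (key2 E σ τ p (p - 1))
  simp only [Preadditive.sub_comp, Category.assoc] at hk2
  rw [← sub_eq_add_neg, ← hk2]
  unfold fOf
  simp only [Category.assoc]

/-! #### Transport of splittings along equivalences -/

lemma hom_f_eq {C D : ChainComplex 𝒜 ℤ} {g g' : C ⟶ D} (h : g = g') (k : ℤ) :
    g.f k = g'.f k := by rw [h]

lemma comp_f_eq {C D E : ChainComplex 𝒜 ℤ} (g : C ⟶ D) (g' : D ⟶ E) (k : ℤ) :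
    (g ≫ g').f k = g.f k ≫ g'.f k := rfl

noncomputable def transport {B : ChainComplex 𝒜 ℤ} {E E' : DWExtension X B}
    (φ : E.Z ≅ E'.Z) (h1 : E.i ≫ φ.hom = E'.i) (h2 : φ.hom ≫ E'.p = E.p)
    (σ' : SplF B E') : SplF B E where
  r k := φ.hom.f k ≫ σ'.r k
  s k := σ'.s k ≫ φ.inv.f k
  ir k := by
    have hc : E.i.f k ≫ φ.hom.f k = E'.i.f k := by
      rw [← comp_f_eq, h1]
    rw [← Category.assoc, hc, σ'.ir k]
  sp k := by
    have h2' : φ.inv ≫ E.p = E'.p := by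
      rw [← h2, ← Category.assoc, φ.inv_hom_id, Category.id_comp]
    have hc : φ.inv.f k ≫ E.p.f k = E'.p.f k := by
      rw [← comp_f_eq, h2']
    rw [Category.assoc, hc, σ'.sp k]
  total k := by
    have h1' : E'.i ≫ φ.inv = E.i := by
      rw [← h1, Category.assoc, φ.hom_inv_id, Category.comp_id]
    have hi : E.i.f k = E'.i.f k ≫ φ.inv.f k := by
      rw [← comp_f_eq, h1']
    have hp : E.p.f k = φ.hom.f k ≫ E'.p.f k := by
      rw [← comp_f_eq, h2]
    have hφ : φ.hom.f k ≫ φ.inv.f k = 𝟙 (E.Z.X k) := by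
      rw [← comp_f_eq, φ.hom_inv_id]
      rfl
    rw [hi, hp]
    calc (φ.hom.f k ≫ σ'.r k) ≫ E'.i.f k ≫ φ.inv.f k +
          (φ.hom.f k ≫ E'.p.f k) ≫ σ'.s k ≫ φ.inv.f k
        = φ.hom.f k ≫ (σ'.r k ≫ E'.i.f k + E'.p.f k ≫ σ'.s k) ≫ φ.inv.f k := by
          simp only [Preadditive.comp_add, Preadditive.add_comp, Category.assoc]
      _ = 𝟙 (E.Z.X k) := by rw [σ'.total k, Category.id_comp, hφ]

lemma fOf_transport (n : ℤ) {E E' : DWExtension X (shiftC (-n - 1) Y)}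
    (φ : E.Z ≅ E'.Z) (h1 : E.i ≫ φ.hom = E'.i) (h2 : φ.hom ≫ E'.p = E.p)
    (σ' : SplF (shiftC (-n - 1) Y) E') :
    fOf X Y n E (transport φ h1 h2 σ') = fOf X Y n E' σ' := by
  funext k
  unfold fOf transport
  dsimp only
  have hφ2 : φ.inv.f (k - 1) ≫ φ.hom.f (k - 1) = 𝟙 (E'.Z.X (k - 1)) := by
    rw [← comp_f_eq, φ.inv_hom_id]
    rfl
  simp only [Category.assoc]
  rw [reassoc_of% (φ.inv.comm k (k - 1))]
  rw [reassoc_of% hφ2]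

/-! #### The twisted extension attached to a cycle -/

variable (X Y) in
noncomputable def tw (n : ℤ) (f : HChain X Y n) (k j : ℤ) :
    X.X k ⟶ (shiftC (-n - 1) Y).X j :=
  if h : j + 1 = k then
    f k ≫ eqToHom (show Y.X (k + n) = (shiftC (-n - 1) Y).X j from congrArg Y.X (by omega))
  else 0

lemma tw_rel (n : ℤ) (f : HChain X Y n) (hf : IsCyc n f) (i j k : ℤ)
    (hij : j + 1 = i) (hjk : k + 1 = j) :
    tw X Y n f i j ≫ (shiftC (-n - 1) Y).d j k + X.d i j ≫ tw X Y n f j k = 0 := by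
  unfold tw
  rw [dif_pos hij, dif_pos hjk]
  rw [Bd_eq Y n j k]
  simp only [neg_smul, Preadditive.comp_neg, Preadditive.comp_zsmul, Category.assoc,
    eqToHom_trans, eqToHom_trans_assoc, eqToHom_refl, Category.id_comp]
  rw [dC Y (show j + n + 1 = i + n by omega) (show k + n + 1 = j + n by omega)]
  simp only [Category.assoc, eqToHom_trans, eqToHom_trans_assoc, eqToHom_refl,
    Category.id_comp]
  rw [← Category.assoc (f i), hf i j hij]
  simp only [Preadditive.zsmul_comp, Category.assoc, smul_smul, ← Units.val_mul,
    Int.units_mul_self, Units.val_one, one_smul, smul_neg, neg_smul, eqToHom_trans,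
    eqToHom_trans_assoc, neg_neg, Preadditive.neg_comp, Preadditive.comp_neg]
  exact neg_add_cancel _

variable (X Y) in
noncomputable def twCx (n : ℤ) (f : HChain X Y n) (hf : IsCyc n f) : ChainComplex 𝒜 ℤ where
  X k := (shiftC (-n - 1) Y).X k ⊞ X.X k
  d k j := biprod.desc ((shiftC (-n - 1) Y).d k j ≫ biprod.inl)
    (tw X Y n f k j ≫ biprod.inl + X.d k j ≫ biprod.inr)
  shape k j h := by
    have h1 : ¬ (j + 1 = k) := by simpa [ComplexShape.down_Rel] using h
    rw [(shiftC (-n - 1) Y).shape _ _ h, X.shape _ _ h]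
    unfold tw
    rw [dif_neg h1]
    simp only [zero_comp, comp_zero, zero_add, add_zero]
    apply biprod.hom_ext' <;> simp
  d_comp_d' i j k hij hjk := by
    simp only [ComplexShape.down_Rel] at hij hjk
    apply biprod.hom_ext'
    · simp
    · simp only [biprod.inr_desc_assoc, Preadditive.add_comp, Category.assoc,
        biprod.inl_desc, biprod.inr_desc, comp_zero, Preadditive.comp_add]
      rw [← Category.assoc (tw X Y n f i j), ← Category.assoc (X.d i j) (tw X Y n f j k),
        ← add_assoc, ← Preadditive.add_comp, tw_rel n f hf i j k hij hjk, zero_comp,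
        zero_add]
      simp

variable (X Y) in
noncomputable def twExt (n : ℤ) (f : HChain X Y n) (hf : IsCyc n f) :
    DWExtension X (shiftC (-n - 1) Y) where
  Z := twCx X Y n f hf
  i := { f := fun k => biprod.inl
         comm' := fun i j _ => by
           dsimp only [twCx]
           rw [biprod.inl_desc] }
  p := { f := fun k => biprod.snd
         comm' := fun i j _ => by
           dsimp only [twCx]
           apply biprod.hom_ext' <;> simp }
  w := by
    apply HomologicalComplex.hom_ext
    intro k
    rw [HomologicalComplex.comp_f, HomologicalComplex.zero_f_apply]
    show biprod.inl ≫ biprod.snd = 0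
    simp
  shortExact := by
    apply HomologicalComplex.shortExact_of_degreewise_shortExact
    intro k
    refine ShortComplex.Splitting.shortExact
      { r := biprod.fst
        s := biprod.inr
        f_r := ?_
        s_g := ?_
        id := ?_ }
    · show biprod.inl ≫ biprod.fst = 𝟙 _
      simp
    · show biprod.inr ≫ biprod.snd = 𝟙 _
      simp
    · show biprod.fst ≫ biprod.inl + biprod.snd ≫ biprod.inr = 𝟙 _
      exact biprod.total
  dwSplit := fun k => ⟨biprod.fst, by exact biprod.inl_fst⟩

/-- canonical splitting family of the twisted extension. -/
noncomputable def twSpl (n : ℤ) (f : HChain X Y n) (hf : IsCyc n f) :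
    SplF (shiftC (-n - 1) Y) (twExt X Y n f hf) where
  r k := biprod.fst
  s k := biprod.inr
  ir k := by
    show biprod.inl ≫ biprod.fst = 𝟙 _
    simp
  sp k := by
    show biprod.inr ≫ biprod.snd = 𝟙 _
    simp
  total k := by
    show biprod.fst ≫ biprod.inl + biprod.snd ≫ biprod.inr = 𝟙 _
    exact biprod.total

lemma twExt_fOf (n : ℤ) (f : HChain X Y n) (hf : IsCyc n f) :
    fOf X Y n (twExt X Y n f hf) (twSpl n f hf) = f := by
  funext k
  show biprod.inr ≫ (twCx X Y n f hf).d k (k - 1) ≫ biprod.fst ≫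
    eqToHom (show (shiftC (-n - 1) Y).X (k - 1) = Y.X (k + n) from
      congrArg Y.X (by omega)) = f k
  dsimp only [twCx]
  rw [biprod.inr_desc_assoc]
  simp only [Preadditive.add_comp, Category.assoc, biprod.inl_fst_assoc,
    biprod.inr_fst_assoc, zero_comp, comp_zero, add_zero]
  unfold tw
  rw [dif_pos (show k - 1 + 1 = k by omega)]
  simp [eqToHom_trans]

/-! #### Boundaries give equivalent twisted extensions -/

variable (X Y) in
noncomputable def wOf (n : ℤ) (u : HChain X Y (n + 1)) (k : ℤ) :
    X.X k ⟶ (shiftC (-n - 1) Y).X k :=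
  -((n.negOnePow : ℤ)) • (u k ≫
    eqToHom (show Y.X (k + (n + 1)) = (shiftC (-n - 1) Y).X k from congrArg Y.X (by omega)))

lemma tw_diff (n : ℤ) (f f' : HChain X Y n) (u : HChain X Y (n + 1))
    (hu : hδ X Y (n + 1) n u = fun k => f k - f' k) (i j : ℤ) (hij : j + 1 = i) :
    tw X Y n f' i j + (wOf X Y n u i) ≫ (shiftC (-n - 1) Y).d i j
      = tw X Y n f i j + X.d i j ≫ wOf X Y n u j := by
  have h0 := congrFun hu i
  rw [hδ_eq' n u i j hij] at h0
  unfold tw wOf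
  rw [dif_pos hij, dif_pos hij]
  rw [Bd_eq Y n i j]
  simp only [neg_smul, smul_neg, Preadditive.neg_comp, Preadditive.comp_neg,
    Preadditive.zsmul_comp, Preadditive.comp_zsmul, Category.assoc, eqToHom_trans,
    eqToHom_trans_assoc, eqToHom_refl, Category.id_comp, Category.comp_id, neg_neg,
    smul_smul, ← Units.val_mul, Int.units_mul_self, Units.val_one, one_smul]
  rw [dC Y (show i + n + 1 = i + (n + 1) by omega) (show j + n + 1 = i + n by omega)]
  simp only [Category.assoc, eqToHom_trans, eqToHom_trans_assoc, eqToHom_refl,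
    Category.id_comp, Category.comp_id]
  have h1 := congrArg (fun t => t ≫ eqToHom
    (show Y.X (i + n) = (shiftC (-n - 1) Y).X j from congrArg Y.X (by omega))) h0
  simp only [Preadditive.add_comp, Preadditive.sub_comp, Preadditive.zsmul_comp,
    Category.assoc, eqToHom_trans] at h1
  have h2 : u i ≫ Y.d (i + (n + 1)) (i + n) ≫ eqToHom
      (show Y.X (i + n) = (shiftC (-n - 1) Y).X j from congrArg Y.X (by omega)) =
      (f i ≫ eqToHom (show Y.X (i + n) = (shiftC (-n - 1) Y).X j from
          congrArg Y.X (by omega)) -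
        f' i ≫ eqToHom (show Y.X (i + n) = (shiftC (-n - 1) Y).X j from
          congrArg Y.X (by omega))) -
      (n.negOnePow : ℤ) • (X.d i j ≫ u j ≫ eqToHom
        (show Y.X (j + (n + 1)) = (shiftC (-n - 1) Y).X j from congrArg Y.X (by omega))) := by
    rw [← h1]
    abel
  rw [h2]
  abel

lemma twExt_congr (n : ℤ) (f f' : HChain X Y n) (hf : IsCyc n f) (hf' : IsCyc n f')
    (u : HChain X Y (n + 1)) (hu : hδ X Y (n + 1) n u = fun k => f k - f' k) :
    DWExtension.equivRel (twExt X Y n f hf) (twExt X Y n f' hf') := by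
  refine ⟨HomologicalComplex.Hom.isoOfComponents
    (fun k => { hom := 𝟙 _ + biprod.snd ≫ wOf X Y n u k ≫ biprod.inl
                inv := 𝟙 _ - biprod.snd ≫ wOf X Y n u k ≫ biprod.inl
                hom_inv_id := ?_
                inv_hom_id := ?_ }) ?_, ?_, ?_⟩
  · dsimp only [twExt, twCx]
    apply biprod.hom_ext' <;>
      simp [Preadditive.comp_sub, Preadditive.sub_comp, Preadditive.add_comp,
        Preadditive.comp_add]
  · dsimp only [twExt, twCx]
    apply biprod.hom_ext' <;>
      simp [Preadditive.comp_sub, Preadditive.sub_comp, Preadditive.add_comp,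
        Preadditive.comp_add]
  · intro i j hij
    simp only [ComplexShape.down_Rel] at hij
    dsimp only [twExt, twCx]
    apply biprod.hom_ext'
    · simp [Preadditive.comp_add, Preadditive.add_comp]
    · have hd := tw_diff n f f' u hu i j hij
      have hd2 := congrArg (fun t => t ≫ (biprod.inl :
        (shiftC (-n - 1) Y).X j ⟶ (shiftC (-n - 1) Y).X j ⊞ X.X j)) hd
      simp only [Preadditive.add_comp, Category.assoc] at hd2
      have hd3 : wOf X Y n u i ≫ (shiftC (-n - 1) Y).d i j ≫ (biprod.inl :
            (shiftC (-n - 1) Y).X j ⟶ (shiftC (-n - 1) Y).X j ⊞ X.X j)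
          = tw X Y n f i j ≫ biprod.inl + X.d i j ≫ wOf X Y n u j ≫ biprod.inl
            - tw X Y n f' i j ≫ biprod.inl := by
        rw [eq_sub_iff_add_eq, add_comm]
        exact hd2
      simp only [Preadditive.comp_add, Preadditive.add_comp, Category.assoc,
        biprod.inl_desc, biprod.inr_desc, biprod.inl_desc_assoc, biprod.inr_desc_assoc,
        biprod.inl_snd_assoc, biprod.inr_snd_assoc, zero_comp, comp_zero, add_zero,
        zero_add, Category.id_comp, Category.comp_id]
      rw [hd3]
      abel
  · apply HomologicalComplex.hom_ext
    intro k
    show biprod.inl ≫ (𝟙 _ + biprod.snd ≫ wOf X Y n u k ≫ biprod.inl) = biprod.inl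
    simp
  · apply HomologicalComplex.hom_ext
    intro k
    show (𝟙 _ + biprod.snd ≫ wOf X Y n u k ≫ biprod.inl) ≫ biprod.snd = biprod.snd
    simp

/-! #### The twisted extension of an extracted cycle is equivalent to the original -/

lemma twExt_equiv (n : ℤ) (E : DWExtension X (shiftC (-n - 1) Y))
    (σ : SplF (shiftC (-n - 1) Y) E) :
    DWExtension.equivRel (twExt X Y n (fOf X Y n E σ) (fOf_cyc n E σ)) E := by
  have hip : ∀ k : ℤ, E.i.f k ≫ E.p.f k = 0 := fun k => by
    have := congrArg (fun ψ => HomologicalComplex.Hom.f ψ k) E.w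
    simpa using this
  refine ⟨HomologicalComplex.Hom.isoOfComponents
    (fun k => { hom := biprod.desc (E.i.f k) (σ.s k)
                inv := biprod.lift (σ.r k) (E.p.f k)
                hom_inv_id := ?_
                inv_hom_id := ?_ }) ?_, ?_, ?_⟩
  · show biprod.desc (E.i.f k) (σ.s k) ≫ biprod.lift (σ.r k) (E.p.f k)
        = 𝟙 ((shiftC (-n - 1) Y).X k ⊞ X.X k)
    apply biprod.hom_ext'
    · apply biprod.hom_ext
      · simp [σ.ir k]
      · simp [hip k]
    · apply biprod.hom_ext
      · simp [σ.sr k]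
      · simp [σ.sp k]
  · show biprod.lift (σ.r k) (E.p.f k) ≫ biprod.desc (E.i.f k) (σ.s k) = 𝟙 (E.Z.X k)
    rw [biprod.lift_desc, σ.total k]
  · intro i j hij
    simp only [ComplexShape.down_Rel] at hij
    dsimp only [twExt, twCx]
    apply biprod.hom_ext'
    · simp only [biprod.inl_desc_assoc, biprod.inl_desc, Category.assoc]
      exact E.i.comm i j
    · simp only [biprod.inr_desc_assoc, biprod.inr_desc, Preadditive.add_comp,
        Category.assoc, biprod.inl_desc, biprod.inr_desc]
      have h2 : tw X Y n (fOf X Y n E σ) i j = σ.s i ≫ E.Z.d i j ≫ σ.r j := by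
        unfold tw fOf
        rw [dif_pos hij, dC E.Z (rfl : i = i) (show i - 1 = j by omega),
          pC σ.r (show i - 1 = j by omega)]
        simp only [Category.assoc, eqToHom_trans, eqToHom_trans_assoc, eqToHom_refl,
          Category.id_comp, Category.comp_id]
      rw [h2]
      have h1 : σ.s i ≫ E.Z.d i j ≫ (σ.r j ≫ E.i.f j + E.p.f j ≫ σ.s j) =
          σ.s i ≫ E.Z.d i j := by rw [σ.total j, Category.comp_id]
      rw [← h1]
      simp only [Preadditive.comp_add, Category.assoc]
      rw [← reassoc_of% (E.p.comm i j), reassoc_of% (σ.sp i)]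
  · apply HomologicalComplex.hom_ext
    intro k
    show biprod.inl ≫ biprod.desc (E.i.f k) (σ.s k) = E.i.f k
    simp
  · apply HomologicalComplex.hom_ext
    intro k
    show biprod.desc (E.i.f k) (σ.s k) ≫ E.p.f k = biprod.snd
    apply biprod.hom_ext'
    · simp [hip k]
    · simp [σ.sp k]

/-! #### Assembly of Part 1a -/

variable (X Y) in
noncomputable def extractKer (n : ℤ) (E : DWExtension X (shiftC (-n - 1) Y)) :
    (hδ X Y n (n - 1)).ker :=
  ⟨fOf X Y n E (splOf E), fOf_mem_ker n E (splOf E)⟩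

variable (X Y) in
lemma extract_indep (n : ℤ) (E : DWExtension X (shiftC (-n - 1) Y))
    (σ : SplF (shiftC (-n - 1) Y) E) :
    (QuotientAddGroup.mk (extractKer X Y n E) : homCxHomology X Y n)
      = QuotientAddGroup.mk ⟨fOf X Y n E σ, fOf_mem_ker n E σ⟩ := by
  rw [QuotientAddGroup.eq]
  apply AddSubgroup.mem_comap.mpr
  obtain ⟨u, hu⟩ := fOf_indep n E (splOf E) σ
  refine ⟨u, ?_⟩
  rw [hu]
  funext k
  exact sub_eq_neg_add _ _

variable (X Y) in
lemma extract_wd (n : ℤ) (E E' : DWExtension X (shiftC (-n - 1) Y))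
    (h : DWExtension.equivRel E E') :
    (QuotientAddGroup.mk (extractKer X Y n E) : homCxHomology X Y n)
      = QuotientAddGroup.mk (extractKer X Y n E') := by
  obtain ⟨φ, h1, h2⟩ := h
  rw [extract_indep X Y n E (transport φ h1 h2 (splOf E'))]
  have heq : (⟨fOf X Y n E (transport φ h1 h2 (splOf E')),
      fOf_mem_ker n E (transport φ h1 h2 (splOf E'))⟩ : (hδ X Y n (n - 1)).ker)
      = extractKer X Y n E' :=
    Subtype.ext (fOf_transport n φ h1 h2 (splOf E'))
  rw [heq]

variable (X Y) in
noncomputable def part1a (n : ℤ) :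
    DWExtClasses X (shiftC (-n - 1) Y) ≃ homCxHomology X Y n where
  toFun := Quotient.lift
    (fun E => (QuotientAddGroup.mk (extractKer X Y n E) : homCxHomology X Y n))
    (fun E E' h => extract_wd X Y n E E' h)
  invFun := fun x => Quotient.liftOn' x
    (fun g => (Quotient.mk (dwSetoid X (shiftC (-n - 1) Y))
        (twExt X Y n g.1 ((cyc_iff n g.1).mp g.2)) : DWExtClasses X (shiftC (-n - 1) Y)))
    (by
      intro a b hab
      rw [QuotientAddGroup.leftRel_apply] at hab
      obtain ⟨u, hu⟩ := AddSubgroup.mem_comap.mp hab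
      apply Quotient.sound
      refine twExt_congr n a.1 b.1 _ _ (-u) ?_
      rw [map_neg, hu]
      funext k
      show -((-a + b : (hδ X Y n (n - 1)).ker) : HChain X Y n) k = _
      show -(-(a : HChain X Y n) k + (b : HChain X Y n) k) = _
      abel)
  left_inv := by
    intro x
    refine Quotient.inductionOn x ?_
    intro E
    apply Quotient.sound
    exact twExt_equiv n E (splOf E)
  right_inv := by
    intro y
    refine QuotientAddGroup.induction_on y ?_
    intro g
    show (QuotientAddGroup.mk (extractKer X Y n
        (twExt X Y n g.1 ((cyc_iff n g.1).mp g.2))) : homCxHomology X Y n) = _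
    rw [extract_indep X Y n _ (twSpl n g.1 ((cyc_iff n g.1).mp g.2))]
    congr 1
    exact Subtype.ext (twExt_fOf n g.1 ((cyc_iff n g.1).mp g.2))

end HLP

end HLP


/-- For chain complexes `X, Y` over an abelian category `𝒜` and `n ∈ ℤ`,
`Ext¹_dw(X, Σ^{-n-1} Y) ≅ H_n (Hom(X,Y)) ≅ K(𝒜)(X, Σ^{-n} Y)`; in particular
`Hom(X,Y)` is exact iff every chain map `Σⁿ X → Y` is null homotopic. -/
theorem homcomplex_homology_lemma {𝒜 : Type u} [Category.{v} 𝒜] [Abelian 𝒜]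
    (X Y : ChainComplex 𝒜 ℤ) :
    (∀ n : ℤ,
      Nonempty (DWExtClasses X (shiftC (-n - 1) Y) ≃ homCxHomology X Y n) ∧
      Nonempty (homCxHomology X Y n ≃+ htpyClasses X (shiftC (-n) Y))) ∧
    ((∀ n : ℤ, (hδ X Y n (n - 1)).ker ≤ (hδ X Y (n + 1) n).range) ↔
      ∀ (m : ℤ) (f : shiftC m X ⟶ Y), Nonempty (Homotopy f 0)) := by
  constructor
  · intro n
    exact ⟨⟨HLP.part1a X Y n⟩, ⟨HLP.part1b X Y n⟩⟩
  · exact HLP.part2 X Y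

end GorensteinAC
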